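/- For every n ∈ ℕ and every t = (t₁,…,tₙ) ∈ ℝⁿ one has 0 ≤ ∏ᵢ₌₁ⁿ cos tᵢ − 1 + ½·Σᵢ₌₁ⁿ tᵢ² ≤ (1/24)·Σᵢ₌₁ⁿ tᵢ⁴ + ¼·Σ_{1 ≤ i < j ≤ n} tᵢ²tⱼ². -/

import Mathlib

open Finset Real

lemma sub_cube_le_sin {x : ℝ} (hx : 0 ≤ x) : x - x ^ 3 / 6 ≤ Real.sin x := by
  have key : MonotoneOn (fun y : ℝ => Real.sin y - (y - y ^ 3 / 6)) (Set.Ici 0) := by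
    apply monotoneOn_of_deriv_nonneg (convex_Ici 0)
    · exact (Real.continuous_sin.sub (by continuity)).continuousOn
    · apply Differentiable.differentiableOn
      exact Real.differentiable_sin.sub (by fun_prop)
    · intro y hy
      have hd : HasDerivAt (fun y : ℝ => Real.sin y - (y - y ^ 3 / 6))
          (Real.cos y - (1 - y ^ 2 / 2)) y := by
        have h1 := (Real.hasDerivAt_sin y)
        have h2 := ((hasDerivAt_pow 3 y).div_const 6)
        have h3 := (hasDerivAt_id y).sub h2
        refine (h1.sub h3).congr_deriv ?_
        push_cast
        ring
      rw [hd.deriv]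
      have := Real.one_sub_sq_div_two_le_cos (x := y)
      linarith
  have h0 := key (Set.self_mem_Ici) (Set.mem_Ici.2 hx) hx
  simp at h0
  linarith

lemma cos_le_taylor (x : ℝ) : Real.cos x ≤ 1 - x ^ 2 / 2 + x ^ 4 / 24 := by
  wlog hx : 0 ≤ x
  case inr =>
    have := this (-x) (by linarith)
    rw [Real.cos_neg] at this; linarith [this, (by ring : (-x) ^ 2 = x ^ 2), (by ring : (-x) ^ 4 = x ^ 4)]
  have key : MonotoneOn (fun y : ℝ => (1 - y ^ 2 / 2 + y ^ 4 / 24) - Real.cos y) (Set.Ici 0) := by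
    apply monotoneOn_of_deriv_nonneg (convex_Ici 0)
    · exact ((by continuity : Continuous fun y : ℝ => 1 - y ^ 2 / 2 + y ^ 4 / 24).sub
        Real.continuous_cos).continuousOn
    · apply Differentiable.differentiableOn
      exact ((by fun_prop : Differentiable ℝ fun y : ℝ => 1 - y ^ 2 / 2 + y ^ 4 / 24).sub
        Real.differentiable_cos)
    · intro y hy
      have hy0 : 0 ≤ y := le_of_lt (by simpa using hy)
      have hd : HasDerivAt (fun y : ℝ => (1 - y ^ 2 / 2 + y ^ 4 / 24) - Real.cos y)
          ((0 - 2 * y / 2 + 4 * y ^ 3 / 24) - (-Real.sin y)) y := by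
        have h1 : HasDerivAt (fun y : ℝ => 1 - y ^ 2 / 2 + y ^ 4 / 24)
            (0 - 2 * y / 2 + 4 * y ^ 3 / 24) y := by
          have := ((hasDerivAt_const y (1:ℝ)).sub ((hasDerivAt_pow 2 y).div_const 2)).add
            ((hasDerivAt_pow 4 y).div_const 24)
          refine this.congr_deriv ?_
          push_cast
          ring
        exact h1.sub (Real.hasDerivAt_cos y)
      rw [hd.deriv]
      have := sub_cube_le_sin hy0
      linarith
  have h0 := key (Set.self_mem_Ici) (Set.mem_Ici.2 hx) hx
  simp at h0
  linarith

lemma cross_succ (n : ℕ) (t : Fin (n + 1) → ℝ) :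
    ∑ i, ∑ j ∈ Finset.univ.filter (fun j => i < j), t i ^ 2 * t j ^ 2 =
      (∑ i : Fin n, ∑ j ∈ Finset.univ.filter (fun j => i < j),
          t i.castSucc ^ 2 * t j.castSucc ^ 2) +
        (∑ i : Fin n, t i.castSucc ^ 2) * t (Fin.last n) ^ 2 := by
  rw [Fin.sum_univ_castSucc]
  have hlast : ∑ j ∈ Finset.univ.filter (fun j => Fin.last n < j),
      t (Fin.last n) ^ 2 * t j ^ 2 = 0 := by
    rw [Finset.sum_filter]
    apply Finset.sum_eq_zero
    intro j _
    simp [not_lt.2 (Fin.le_last j)]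
  rw [hlast, add_zero, Finset.sum_mul, ← Finset.sum_add_distrib]
  apply Finset.sum_congr rfl
  intro i _
  rw [Finset.sum_filter, Finset.sum_filter, Fin.sum_univ_castSucc]
  simp [Fin.castSucc_lt_castSucc_iff, Fin.castSucc_lt_last]

theorem prod_cos_bounds (n : ℕ) (t : Fin n → ℝ) :
    0 ≤ (∏ i, Real.cos (t i)) - 1 + 1 / 2 * ∑ i, t i ^ 2 ∧
    (∏ i, Real.cos (t i)) - 1 + 1 / 2 * ∑ i, t i ^ 2 ≤
      1 / 24 * ∑ i, t i ^ 4 +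
        1 / 4 * ∑ i, ∑ j ∈ Finset.univ.filter (fun j => i < j), t i ^ 2 * t j ^ 2 := by
  induction n with
  | zero => norm_num
  | succ n ih =>
    set s : Fin n → ℝ := fun i => t i.castSucc with hs
    set a : ℝ := t (Fin.last n) with ha
    obtain ⟨h1, h2⟩ := ih s
    have hprod : ∏ i, Real.cos (t i) = (∏ i, Real.cos (s i)) * Real.cos a :=
      Fin.prod_univ_castSucc _
    have hsum2 : ∑ i, t i ^ 2 = (∑ i, s i ^ 2) + a ^ 2 := Fin.sum_univ_castSucc _
    have hsum4 : ∑ i, t i ^ 4 = (∑ i, s i ^ 4) + a ^ 4 := Fin.sum_univ_castSucc _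
    have hcross := cross_succ n t
    rw [hprod, hsum2, hsum4, hcross]
    set P : ℝ := ∏ i, Real.cos (s i) with hP
    have hPabs : |P| ≤ 1 := by
      rw [hP, abs_prod]
      exact Finset.prod_le_one (fun _ _ => abs_nonneg _) (fun i _ => Real.abs_cos_le_one _)
    have hPle : P ≤ 1 := (le_abs_self _).trans hPabs
    have hc1 : 1 - a ^ 2 / 2 ≤ Real.cos a := Real.one_sub_sq_div_two_le_cos
    have hc2 : Real.cos a ≤ 1 - a ^ 2 / 2 + a ^ 4 / 24 := cos_le_taylor a
    have hcle : Real.cos a ≤ 1 := Real.cos_le_one a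
    constructor
    · nlinarith [mul_nonneg (by linarith : (0:ℝ) ≤ 1 - P)
        (by linarith : (0:ℝ) ≤ 1 - Real.cos a), h1]
    · have hx : 0 ≤ Real.cos a - 1 + a ^ 2 / 2 := by linarith
      have h3 : P * (Real.cos a - 1 + a ^ 2 / 2) ≤ Real.cos a - 1 + a ^ 2 / 2 := by
        nlinarith
      have h4 : (1 - P) * (a ^ 2 / 2) ≤ (1 / 2 * ∑ i, s i ^ 2) * (a ^ 2 / 2) :=
        mul_le_mul_of_nonneg_right (by linarith) (by positivity)
      nlinarith [h2, h3, h4, hc2]
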